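/- Let G be a graph such that every finite subgraph of G has path-width at most k, and G is maximal with this property under adding edges. Then every finite subgraph G' of G admits a path-decomposition of width at most k in which every bag is a clique of G'. -/

import Mathlib

open Set

universe u

/-- The intersection graph of a family `F` of sets: vertices are the members of `F`,
two distinct members adjacent iff they intersect. -/
def IntGraph {W : Type u} (F : Set (Set W)) : SimpleGraph F where
  Adj S T := S ≠ T ∧ ((S : Set W) ∩ (T : Set W)).Nonempty
  symm := by
    refine ⟨?_⟩
    rintro S T ⟨h1, x, hx1, hx2⟩
    exact ⟨h1.symm, x, hx2, hx1⟩
  loopless := by refine ⟨?_⟩; rintro S ⟨h, _⟩; exact h rfl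

/-- `G` has an induced cycle of length at least 4. -/
def HasLongInducedCycle {V : Type u} (G : SimpleGraph V) : Prop :=
  ∃ n : ℕ, 4 ≤ n ∧ ∃ f : ZMod n → V, Function.Injective f ∧
    ∀ i j : ZMod n, G.Adj (f i) (f j) ↔ (j = i + 1 ∨ i = j + 1)

/-- A graph is chordal iff it has no induced cycle of length at least 4. -/
def Chordal {V : Type u} (G : SimpleGraph V) : Prop := ¬ HasLongInducedCycle G

/-- The chordal property for a family of sets: its intersection graph is chordal. -/
def ChordalProp {W : Type u} (F : Set (Set W)) : Prop := Chordal (IntGraph F)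

/-- The finite Helly property: every nonempty finite subfamily whose members pairwise
intersect has a common element. -/
def FiniteHelly {W : Type u} (F : Set (Set W)) : Prop :=
  ∀ R : Finset (Set W), R.Nonempty → ↑R ⊆ F →
    (∀ S ∈ R, ∀ T ∈ R, S ≠ T → (S ∩ T).Nonempty) →
    (⋂ S ∈ R, S).Nonempty

/-- A family `F` is well-founded if there is no sequence `(Sᵢ)` of members of `F` with
nonempty total intersection such that no partial intersection `S₀ ∩ ⋯ ∩ Sᵢ` is contained
in `S_{i+1}`. -/
def WellFoundedFamily {W : Type u} (F : Set (Set W)) : Prop :=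
  ¬ ∃ S : ℕ → Set W, (∀ i, S i ∈ F) ∧ (⋂ i, S i).Nonempty ∧
      ∀ i, ¬ (⋂ j ≤ i, S j) ⊆ S (i + 1)

/-- `X` is `F`-connected: for every partition of `X` into two nonempty parts, some
member of `F` included in `X` meets both parts. -/
def FConnected {W : Type u} (F : Set (Set W)) (X : Set W) : Prop :=
  ∀ A B : Set W, A ∪ B = X → A ∩ B = ∅ → A.Nonempty → B.Nonempty →
    ∃ S ∈ F, S ⊆ X ∧ (S ∩ A).Nonempty ∧ (S ∩ B).Nonempty

/-- A path-decomposition of `G` indexed by `Fin n`: bags cover all vertices and edges,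
and for each vertex the set of indices of bags containing it is an interval. -/
def IsPathDecomp {V : Type u} (G : SimpleGraph V) {n : ℕ} (B : Fin n → Finset V) : Prop :=
  (∀ v, ∃ i, v ∈ B i) ∧
  (∀ u v, G.Adj u v → ∃ i, u ∈ B i ∧ v ∈ B i) ∧
  (∀ v : V, ∀ i i' i'' : Fin n, i ≤ i' → i' ≤ i'' → v ∈ B i → v ∈ B i'' → v ∈ B i')

/-- `G` has path-width at most `k`: some path-decomposition has all bags of size ≤ k+1. -/
def PathWidthLE {V : Type u} (G : SimpleGraph V) (k : ℕ) : Prop :=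
  ∃ (n : ℕ) (B : Fin n → Finset V), IsPathDecomp G B ∧ ∀ i, (B i).card ≤ k + 1

/-- `G` has line-width at most `k`: there is a decomposition indexed by a linearly ordered
set, satisfying the path-decomposition axioms, with all bags of size ≤ k+1. -/
def LineWidthLE {V : Type u} (G : SimpleGraph V) (k : ℕ) : Prop :=
  ∃ (L : Type u) (r : L → L → Prop), IsLinearOrder L r ∧
    ∃ B : L → Finset V,
      (∀ v, ∃ i, v ∈ B i) ∧
      (∀ u v, G.Adj u v → ∃ i, u ∈ B i ∧ v ∈ B i) ∧
      (∀ v i i' i'', r i i' → r i' i'' → v ∈ B i → v ∈ B i'' → v ∈ B i') ∧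
      ∀ i, (B i).card ≤ k + 1

/-- Restriction of a path decomposition to a smaller finite vertex set. -/
lemma restrict_decomp {V : Type u} (H : SimpleGraph V) (U W : Finset V) (hUW : U ⊆ W)
    {n : ℕ} (B : Fin n → Finset (↑W : Set V)) (hB : IsPathDecomp (H.induce (↑W : Set V)) B) :
    ∃ B' : Fin n → Finset (↑U : Set V),
      IsPathDecomp (H.induce (↑U : Set V)) B' ∧
      (∀ i, (B' i).card ≤ (B i).card) ∧
      ∀ (i : Fin n) (v : V) (hvU : v ∈ U) (hvW : v ∈ W),
        ((⟨v, Finset.mem_coe.mpr hvU⟩ : (↑U : Set V)) ∈ B' i ↔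
          (⟨v, Finset.mem_coe.mpr hvW⟩ : (↑W : Set V)) ∈ B i) := by
  classical
  set f : (↑U : Set V) → (↑W : Set V) :=
    fun x => ⟨x.1, Finset.coe_subset.mpr hUW x.2⟩ with hf
  have hinj : Function.Injective f := by
    intro a b hab
    have : (f a).1 = (f b).1 := congrArg Subtype.val hab
    exact Subtype.ext this
  refine ⟨fun i => (B i).preimage f hinj.injOn, ⟨?_, ?_, ?_⟩, ?_, ?_⟩
  · intro v
    obtain ⟨i, hi⟩ := hB.1 (f v)
    exact ⟨i, Finset.mem_preimage.mpr hi⟩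
  · intro a b hab
    have : (H.induce (↑W : Set V)).Adj (f a) (f b) := by
      simpa using (by simpa using hab : H.Adj a.1 b.1)
    obtain ⟨i, hi1, hi2⟩ := hB.2.1 _ _ this
    exact ⟨i, Finset.mem_preimage.mpr hi1, Finset.mem_preimage.mpr hi2⟩
  · intro v i i' i'' h1 h2 hv1 hv2
    exact Finset.mem_preimage.mpr
      (hB.2.2 (f v) i i' i'' h1 h2 (Finset.mem_preimage.mp hv1) (Finset.mem_preimage.mp hv2))
  · intro i
    exact Finset.card_le_card_of_injOn f (fun x hx => Finset.mem_preimage.mp hx) hinj.injOn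
  · intro i v hvU hvW
    rw [Finset.mem_preimage]

/-- From edge-maximality: for every nonadjacent pair `u, v` there is a finite set
containing `u, v` such that every width-`≤ k` path decomposition of the induced
subgraph separates `u` from `v`. -/
lemma exists_sep {V : Type u} (G : SimpleGraph V) (k : ℕ)
    (hmax : ∀ u v : V, u ≠ v → ¬ G.Adj u v →
      ∃ U : Finset V,
        ¬ PathWidthLE ((G ⊔ SimpleGraph.fromEdgeSet {s(u, v)}).induce (↑U : Set V)) k) :
    ∀ u v : V, u ≠ v → ¬ G.Adj u v →
      ∃ U₀ : Finset V, u ∈ U₀ ∧ v ∈ U₀ ∧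
        ∀ (m : ℕ) (B : Fin m → Finset (↑U₀ : Set V)),
          IsPathDecomp (G.induce (↑U₀ : Set V)) B → (∀ i, (B i).card ≤ k + 1) →
          ∀ (hu : u ∈ U₀) (hv : v ∈ U₀) (i : Fin m),
            ¬ ((⟨u, Finset.mem_coe.mpr hu⟩ : (↑U₀ : Set V)) ∈ B i ∧
               (⟨v, Finset.mem_coe.mpr hv⟩ : (↑U₀ : Set V)) ∈ B i) := by
  classical
  intro u v huv hadj
  obtain ⟨U₀, hU₀⟩ := hmax u v huv hadj
  refine ⟨insert u (insert v U₀), by simp, by simp, ?_⟩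
  set U₁ : Finset V := insert u (insert v U₀) with hU₁
  intro m B hB hw hu hv i ⟨hui, hvi⟩
  -- B is also a path decomposition of the graph with the extra edge uv
  have hB' : IsPathDecomp ((G ⊔ SimpleGraph.fromEdgeSet {s(u, v)}).induce (↑U₁ : Set V)) B := by
    refine ⟨hB.1, ?_, hB.2.2⟩
    intro a b hab
    have hab2 : (G ⊔ SimpleGraph.fromEdgeSet {s(u, v)}).Adj a.1 b.1 := hab
    rw [SimpleGraph.sup_adj, SimpleGraph.fromEdgeSet_adj] at hab2
    rcases hab2 with hG | ⟨hs, hne⟩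
    · exact hB.2.1 a b (by simpa using hG)
    · rcases Sym2.eq_iff.mp (by simpa using hs) with ⟨ha, hb⟩ | ⟨ha, hb⟩
      · refine ⟨i, ?_, ?_⟩
        · have : a = (⟨u, Finset.mem_coe.mpr hu⟩ : (↑U₁ : Set V)) := Subtype.ext ha
          rw [this]; exact hui
        · have : b = (⟨v, Finset.mem_coe.mpr hv⟩ : (↑U₁ : Set V)) := Subtype.ext hb
          rw [this]; exact hvi
      · refine ⟨i, ?_, ?_⟩
        · have : a = (⟨v, Finset.mem_coe.mpr hv⟩ : (↑U₁ : Set V)) := Subtype.ext ha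
          rw [this]; exact hvi
        · have : b = (⟨u, Finset.mem_coe.mpr hu⟩ : (↑U₁ : Set V)) := Subtype.ext hb
          rw [this]; exact hui
  -- restrict to U₀ to contradict hU₀
  have hsub : U₀ ⊆ U₁ := fun x hx => by simp [hU₁, hx]
  obtain ⟨B'', hB'', hcard'', _⟩ :=
    restrict_decomp (G ⊔ SimpleGraph.fromEdgeSet {s(u, v)}) U₀ U₁ hsub B hB'
  exact hU₀ ⟨m, B'', hB'', fun j => (hcard'' j).trans (hw j)⟩

/-- If every finite subgraph of `G` has path-width at most `k` and `G` is edge-maximal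
with this property, then every finite subgraph of `G` has a path-decomposition of width
at most `k` all of whose bags are cliques. -/
theorem stmt15 {V : Type u} (G : SimpleGraph V) (k : ℕ)
    (h : ∀ U : Finset V, PathWidthLE (G.induce (↑U : Set V)) k)
    (hmax : ∀ u v : V, u ≠ v → ¬ G.Adj u v →
      ∃ U : Finset V,
        ¬ PathWidthLE ((G ⊔ SimpleGraph.fromEdgeSet {s(u, v)}).induce (↑U : Set V)) k) :
    ∀ U : Finset V, ∃ (n : ℕ) (B : Fin n → Finset (↑U : Set V)),
      IsPathDecomp (G.induce (↑U : Set V)) B ∧ (∀ i, (B i).card ≤ k + 1) ∧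
      ∀ i, (G.induce (↑U : Set V)).IsClique (↑(B i) : Set (↑U : Set V)) := by
  classical
  intro U
  have key := exists_sep G k hmax
  -- choose a separating set for every nonadjacent pair
  set F : V × V → Finset V := fun p =>
    if hp : p.1 ≠ p.2 ∧ ¬ G.Adj p.1 p.2 then (key p.1 p.2 hp.1 hp.2).choose else ∅ with hF
  set W : Finset V := U ∪ (U ×ˢ U).biUnion F with hWdef
  have hUW : U ⊆ W := Finset.subset_union_left
  obtain ⟨m, B, hB, hw⟩ := h W
  obtain ⟨B', hB', hcard', hmem'⟩ := restrict_decomp G U W hUW B hB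
  refine ⟨m, B', hB', fun i => (hcard' i).trans (hw i), ?_⟩
  intro i a ha b hb hab
  -- a b : ↥(↑U : Set V), show adjacency in induced graph
  by_contra hadj
  have hGadj : ¬ G.Adj a.1 b.1 := fun hg => hadj (by simpa using hg)
  have hne : a.1 ≠ b.1 := fun e => hab (Subtype.ext e)
  have hp : (a.1, b.1).1 ≠ (a.1, b.1).2 ∧ ¬ G.Adj (a.1, b.1).1 (a.1, b.1).2 := ⟨hne, hGadj⟩
  have hspec := (key a.1 b.1 hne hGadj).choose_spec
  set U₀ : Finset V := (key a.1 b.1 hne hGadj).choose with hU₀def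
  obtain ⟨haU₀, hbU₀, hsep⟩ := hspec
  have haU : a.1 ∈ U := Finset.mem_coe.mp a.2
  have hbU : b.1 ∈ U := Finset.mem_coe.mp b.2
  have hFp : F (a.1, b.1) = U₀ := by rw [hF]; simp only [dif_pos hp]; rfl
  have hU₀W : U₀ ⊆ W := by
    intro x hx
    rw [hWdef]
    refine Finset.mem_union_right _ (Finset.mem_biUnion.mpr ⟨(a.1, b.1), ?_, ?_⟩)
    · exact Finset.mem_product.mpr ⟨haU, hbU⟩
    · rw [hFp]; exact hx
  obtain ⟨B₀, hB₀, hcard₀, hmem₀⟩ := restrict_decomp G U₀ W hU₀W B hB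
  -- memberships in the big bag
  have haW : a.1 ∈ W := hUW haU
  have hbW : b.1 ∈ W := hUW hbU
  have haBi : (⟨a.1, Finset.mem_coe.mpr haW⟩ : (↑W : Set V)) ∈ B i := by
    rw [← hmem' i a.1 haU haW]
    exact Finset.mem_coe.mp ha
  have hbBi : (⟨b.1, Finset.mem_coe.mpr hbW⟩ : (↑W : Set V)) ∈ B i := by
    rw [← hmem' i b.1 hbU hbW]
    exact Finset.mem_coe.mp hb
  exact hsep m B₀ hB₀ (fun j => (hcard₀ j).trans (hw j)) haU₀ hbU₀ i
    ⟨(hmem₀ i a.1 haU₀ haW).mpr haBi, (hmem₀ i b.1 hbU₀ hbW).mpr hbBi⟩
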